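/- Consider the class of ordinals with its order topology and derived-set operator d. For any ordinal α, the following are equivalent: (i) α is d-reflexive: α ∈ d(Ω) and for every set A of ordinals, α ∈ d(A) implies α ∈ d(d(A)); (ii) α is doubly d-reflexive: α ∈ d(Ω) and for all sets A, B of ordinals, α ∈ d(A) ∩ d(B) implies α ∈ d(d(A) ∩ d(B)); (iii) the cofinality of α is uncountable, cf(α) > ℵ₀. -/

import Mathlib

open Set Ordinal

lemma mem_derivedSet_ord {A : Set Ordinal} {o : Ordinal} :
    o ∈ derivedSet A ↔ o ≠ 0 ∧ ∀ p < o, (A ∩ Set.Ioo p o).Nonempty :=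
  Ordinal.isAcc_iff o A

lemma aux_mem_univ {α : Ordinal} (h : Cardinal.aleph0 < α.cof) :
    α ∈ derivedSet (Set.univ : Set Ordinal) := by
  have hlim : Order.IsSuccLimit α := Ordinal.aleph0_le_cof.1 h.le
  rw [mem_derivedSet_ord]
  exact ⟨hlim.pos.ne', fun p hp =>
    ⟨Order.succ p, ⟨Set.mem_univ _, Order.lt_succ p, hlim.succ_lt hp⟩⟩⟩

lemma aux32 {α : Ordinal} (h : Cardinal.aleph0 < α.cof) {A B : Set Ordinal}
    (hA : α ∈ derivedSet A) (hB : α ∈ derivedSet B) :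
    α ∈ derivedSet (derivedSet A ∩ derivedSet B) := by
  rw [mem_derivedSet_ord] at hA hB ⊢
  refine ⟨hA.1, fun p hp => ?_⟩
  have next : ∀ q, q < α → ∃ x : Ordinal × Ordinal,
      x.1 ∈ A ∧ x.2 ∈ B ∧ q < x.1 ∧ x.1 < x.2 ∧ x.2 < α := by
    intro q hq
    obtain ⟨a, haA, hqa, haα⟩ : ∃ a, a ∈ A ∧ q < a ∧ a < α := by
      obtain ⟨a, ha⟩ := hA.2 q hq; exact ⟨a, ha.1, ha.2.1, ha.2.2⟩
    obtain ⟨b, hb⟩ := hB.2 a haα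
    exact ⟨(a, b), haA, hb.1, hqa, hb.2.1, hb.2.2⟩
  choose f hfA hfB hflt hf12 hfα using next
  -- the recursive sequence
  let t : ℕ → {q : Ordinal // q < α} := fun n =>
    Nat.rec ⟨p, hp⟩ (fun _ s => ⟨(f s.1 s.2).2, hfα s.1 s.2⟩) n
  set v : ℕ → Ordinal := fun n => (t n).1 with hv
  have hvα : ∀ n, v n < α := fun n => (t n).2
  have hstep : ∀ n, v n < (f (v n) (hvα n)).1 ∧ (f (v n) (hvα n)).1 < v (n + 1) := by
    intro n
    exact ⟨hflt _ _, hf12 _ _⟩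
  have hmono : StrictMono v := strictMono_nat_of_lt_succ fun n =>
    (hstep n).1.trans (hstep n).2
  set β : Ordinal := ⨆ n, v n with hβ
  have hle : ∀ n, v n ≤ β := fun n => Ordinal.le_iSup v n
  have hβα : β < α := by
    refine Ordinal.iSup_lt_ord_lift ?_ hvα
    rwa [Cardinal.mk_nat, Cardinal.lift_aleph0]
  have hpβ : p < β := lt_of_lt_of_le (hmono (Nat.lt_succ_self 0)) (hle 1)
  have hlt : ∀ q, q < β → ∃ n, q < v n := by
    intro q hq
    exact (Ordinal.lt_iSup_iff).1 hq
  refine ⟨β, ⟨?_, ?_⟩, hpβ, hβα⟩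
  · rw [mem_derivedSet_ord]
    refine ⟨((zero_le (a := p)).trans_lt hpβ).ne', fun q hq => ?_⟩
    obtain ⟨n, hn⟩ := hlt q hq
    exact ⟨(f (v n) (hvα n)).1, hfA _ _,
      hn.trans (hstep n).1, (hstep n).2.trans_le (hle (n + 1))⟩
  · rw [mem_derivedSet_ord]
    refine ⟨((zero_le (a := p)).trans_lt hpβ).ne', fun q hq => ?_⟩
    obtain ⟨n, hn⟩ := hlt q hq
    refine ⟨v (n + 1), ?_, hn.trans (hmono (Nat.lt_succ_self n)),
      (hmono (Nat.lt_succ_self (n + 1))).trans_le (hle (n + 2))⟩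
    exact hfB (v n) (hvα n)

lemma aux13 {α : Ordinal}
    (h0 : α ∈ derivedSet (Set.univ : Set Ordinal))
    (h1 : ∀ A : Set Ordinal, α ∈ derivedSet A → α ∈ derivedSet (derivedSet A)) :
    Cardinal.aleph0 < α.cof := by
  have hlim : Order.IsSuccLimit α := Ordinal.IsAcc.isSuccLimit h0
  by_contra hle
  push_neg at hle
  have hcof : α.cof = Cardinal.aleph0 := le_antisymm hle (Ordinal.aleph0_le_cof.2 hlim)
  have hord : α.cof.ord = Ordinal.omega0 := by rw [hcof, Cardinal.ord_aleph0]
  obtain ⟨f, hf⟩ := Ordinal.exists_fundamental_sequence α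
  have hnat : ∀ n : ℕ, (n : Ordinal) < α.cof.ord := fun n => by
    rw [hord]; exact Ordinal.nat_lt_omega0 n
  set g : ℕ → Ordinal := fun n => f n (hnat n) with hg
  have gs : StrictMono g := fun m n hmn => hf.2.1 _ _ (by exact_mod_cast hmn)
  have gα : ∀ n, g n < α := fun n => hf.2.2 ▸ Ordinal.lt_blsub _ _ _
  have gcof : ∀ p, p < α → ∃ n, p ≤ g n := by
    intro p hp
    rw [← hf.2.2, Ordinal.lt_blsub_iff] at hp
    obtain ⟨i, hi, hpi⟩ := hp
    obtain ⟨n, rfl⟩ := Ordinal.lt_omega0.1 (hord ▸ hi)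
    exact ⟨n, hpi⟩
  have hαA : α ∈ derivedSet (Set.range g) := by
    rw [mem_derivedSet_ord]
    refine ⟨hlim.pos.ne', fun p hp => ?_⟩
    obtain ⟨n, hn⟩ := gcof p hp
    exact ⟨g (n + 1), ⟨n + 1, rfl⟩, hn.trans_lt (gs (Nat.lt_succ_self n)), gα _⟩
  have h2 := h1 _ hαA
  rw [mem_derivedSet_ord] at h2
  obtain ⟨β, hβd, hβ0, hβα⟩ := h2.2 0 hlim.pos
  have hβacc := (mem_derivedSet_ord).1 hβd
  have hex : ∃ n, β ≤ g n := gcof β hβα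
  have hn : β ≤ g (Nat.find hex) := Nat.find_spec hex
  rcases h : Nat.find hex with _ | k
  · obtain ⟨x, ⟨m, rfl⟩, _, hx2⟩ := hβacc.2 0 hβ0
    have : β ≤ g m := (h ▸ hn).trans (gs.monotone (Nat.zero_le m))
    exact absurd hx2 (not_lt.2 this)
  · have hkfind : k < Nat.find hex := by rw [h]; exact Nat.lt_succ_self k
    have hk : g k < β := not_le.1 (Nat.find_min hex hkfind)
    obtain ⟨x, ⟨m, rfl⟩, hx1, hx2⟩ := hβacc.2 (g k) hk
    have hmk : m < k + 1 := gs.lt_iff_lt.1 (hx2.trans_le (h ▸ hn))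
    exact absurd hx1 (not_lt.2 (gs.monotone (Nat.lt_succ_iff.1 hmk)))

/-- For the ordinals with the order topology and derived-set
operator `d`, the following are equivalent for an ordinal `α`:
(i) `α` is d-reflexive; (ii) `α` is doubly d-reflexive;
(iii) `α` has uncountable cofinality. -/
theorem ordinal_dReflexive_tfae (α : Ordinal) :
    List.TFAE
      [α ∈ derivedSet (Set.univ : Set Ordinal) ∧
          ∀ A : Set Ordinal, α ∈ derivedSet A → α ∈ derivedSet (derivedSet A),
        α ∈ derivedSet (Set.univ : Set Ordinal) ∧
          ∀ A B : Set Ordinal, α ∈ derivedSet A ∩ derivedSet B →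
            α ∈ derivedSet (derivedSet A ∩ derivedSet B),
        Cardinal.aleph0 < α.cof] := by
  tfae_have 2 → 1 := fun ⟨h0, h⟩ => ⟨h0, fun A hA => by
    simpa [Set.inter_self] using h A A ⟨hA, hA⟩⟩
  tfae_have 1 → 3 := fun ⟨h0, h⟩ => aux13 h0 h
  tfae_have 3 → 2 := fun h => ⟨aux_mem_univ h, fun A B hAB => aux32 h hAB.1 hAB.2⟩
  tfae_finish
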